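/- For all m, n ≥ 3, the strong odd chromatic number of I_y(G_m, G_n) satisfies 7 ≤ χ_so(I_y(G_m, G_n)) ≤ 17. -/

import Mathlib

open SimpleGraph

/-- A coloring `φ` of the vertices of `G` is a strong odd coloring if it is proper and,
for every vertex `v` and every color `c`, the number of neighbors of `v` colored `c`
is either zero or odd. -/
def IsStrongOddColoring {V α : Type*} (G : SimpleGraph V) (φ : V → α) : Prop :=
  (∀ u v : V, G.Adj u v → φ u ≠ φ v) ∧
  ∀ (v : V) (c : α),
    {u : V | G.Adj v u ∧ φ u = c}.ncard = 0 ∨ Odd {u : V | G.Adj v u ∧ φ u = c}.ncard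

/-- The strong odd chromatic number: the least `k` such that `G` admits a strong odd
coloring with `k` colors. -/
noncomputable def strongOddChromaticNumber {V : Type*} (G : SimpleGraph V) : ℕ :=
  sInf {k : ℕ | ∃ φ : V → Fin k, IsStrongOddColoring G φ}

/-- The join `G ∨ H` of two graphs: disjoint copies of `G` and `H` together with all
edges between them. -/
def joinGraph {V W : Type*} (G : SimpleGraph V) (H : SimpleGraph W) :
    SimpleGraph (V ⊕ W) where
  Adj x y :=
    match x, y with
    | Sum.inl a, Sum.inl b => G.Adj a b
    | Sum.inl _, Sum.inr _ => True
    | Sum.inr _, Sum.inl _ => True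
    | Sum.inr a, Sum.inr b => H.Adj a b
  symm := ⟨by rintro (a | a) (b | b) h <;> first | exact h.symm | trivial⟩
  loopless := ⟨by rintro (a | a) h <;> first | exact G.loopless.irrefl a h | exact H.loopless.irrefl a h⟩

/-- The wheel graph `W_n = C_n ∨ K_1`. -/
def wheelGraph (n : ℕ) : SimpleGraph (Fin n ⊕ Fin 1) :=
  joinGraph (cycleGraph n) (⊥ : SimpleGraph (Fin 1))

/-- `G_n = C_n ∨ K̄_2`; the two vertices of `K̄_2` are `x_n = Sum.inr 0` and
`y_n = Sum.inr 1`. -/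
def cycleJoinTwo (n : ℕ) : SimpleGraph (Fin n ⊕ Fin 2) :=
  joinGraph (cycleGraph n) (⊥ : SimpleGraph (Fin 2))

/-- The one point union of graphs `G` and `H`, obtained by identifying the vertex
`a` of `G` with the vertex `b` of `H` (the identified vertex is `Sum.inl a`). -/
def onePointUnion {V W : Type*} (G : SimpleGraph V) (H : SimpleGraph W) (a : V) (b : W) :
    SimpleGraph (V ⊕ {w : W // w ≠ b}) where
  Adj x y :=
    match x, y with
    | Sum.inl u, Sum.inl v => G.Adj u v
    | Sum.inl u, Sum.inr v => u = a ∧ H.Adj b v.1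
    | Sum.inr v, Sum.inl u => u = a ∧ H.Adj b v.1
    | Sum.inr u, Sum.inr v => H.Adj u.1 v.1
  symm := by
    refine ⟨?_⟩
    rintro (u | u) (v | v) h
    · exact h.symm
    · exact h
    · exact h
    · exact h.symm
  loopless := by
    refine ⟨?_⟩
    rintro (u | u) h
    · exact G.loopless.irrefl u h
    · exact H.loopless.irrefl u.1 h

/-- `I_y(G_m, G_n)`: the one point union of `G_m = C_m ∨ K̄_2` and `G_n = C_n ∨ K̄_2`
obtained by identifying the vertices `y_m` and `y_n`. -/
def Iy (m n : ℕ) :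
    SimpleGraph ((Fin m ⊕ Fin 2) ⊕ {w : Fin n ⊕ Fin 2 // w ≠ Sum.inr 1}) :=
  onePointUnion (cycleJoinTwo m) (cycleJoinTwo n) (Sum.inr 1) (Sum.inr 1)

/-- A planar embedding of a graph `G`: an injective placement of the vertices in the
plane together with, for each edge, an arc (injective path) joining the images of its
endpoints, such that arcs do not pass through images of other vertices and two arcs of
distinct edges meet only in common endpoints. -/
structure PlanarEmbedding {V : Type*} (G : SimpleGraph V) where
  vmap : V → ℝ × ℝ
  vmap_inj : Function.Injective vmap
  arc : ∀ u v : V, G.Adj u v → Path (vmap u) (vmap v)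
  arc_symm : ∀ (u v : V) (h : G.Adj u v), arc v u h.symm = (arc u v h).symm
  arc_inj : ∀ (u v : V) (h : G.Adj u v), Function.Injective (arc u v h)
  arc_vertex : ∀ (u v : V) (h : G.Adj u v) (w : V),
    vmap w ∈ Set.range (arc u v h) → w = u ∨ w = v
  arc_disjoint : ∀ (u v u' v' : V) (h : G.Adj u v) (h' : G.Adj u' v'),
    s(u, v) ≠ s(u', v') →
    Set.range (arc u v h) ∩ Set.range (arc u' v' h') ⊆
      ({vmap u, vmap v} ∩ {vmap u', vmap v'} : Set (ℝ × ℝ))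

/-- A graph is planar if it admits a planar embedding. -/
def IsPlanar {V : Type*} (G : SimpleGraph V) : Prop :=
  Nonempty (PlanarEmbedding G)
namespace SOCaux

/-! ### Arithmetic: the cyclic coloring pattern -/

def tl (m : ℕ) : ℕ := (m - 3) % 6
def blk (m : ℕ) : ℕ := m - tl m
def cyc (m i : ℕ) : ℕ := if i < blk m then i % 3 else 3 + (i - blk m)

lemma blk_facts (m : ℕ) (hm : 3 ≤ m) :
    blk m % 6 = 3 ∧ tl m < 6 ∧ blk m + tl m = m ∧ 3 ≤ blk m := by
  unfold blk tl; omega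

lemma cyc_lt (m i : ℕ) (hm : 3 ≤ m) (hi : i < m) : cyc m i < 8 := by
  have := blk_facts m hm; unfold cyc; split <;> omega

lemma cyc_adj_ne (m a b : ℕ) (hm : 3 ≤ m) (ha : a < m) (hb : b < m)
    (h1 : a + 1 = b ∨ b + 1 = a ∨ (a + 1 = m ∧ b = 0) ∨ (b + 1 = m ∧ a = 0)) :
    cyc m a ≠ cyc m b := by
  have := blk_facts m hm; unfold cyc; split <;> split <;> omega

lemma cyc_nbr (m a b c : ℕ) (hm : 3 ≤ m) (ha : a < m) (hb : b < m) (hc : c < m)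
    (h1 : a + 1 = b ∨ b + 1 = a ∨ (a + 1 = m ∧ b = 0) ∨ (b + 1 = m ∧ a = 0))
    (h2 : a + 1 = c ∨ c + 1 = a ∨ (a + 1 = m ∧ c = 0) ∨ (c + 1 = m ∧ a = 0))
    (he : cyc m b = cyc m c) : b = c := by
  have := blk_facts m hm; unfold cyc at he; split at he <;> split at he <;> omega

lemma count3 (c : ℕ) (hc : c < 3) : ∀ a : ℕ,
    ((Finset.range (3 * a)).filter (fun i => i % 3 = c)).card = a := by
  intro a
  induction a with
  | zero => simp
  | succ a ih =>
    have h : 3 * (a + 1) = ((3 * a + 1) + 1) + 1 := by ring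
    have hnm : ∀ x, 3 * a ≤ x → x ∉ (Finset.range (3 * a)).filter (fun i => i % 3 = c) := by
      intro x hx; simp; omega
    have e0 : 3 * a % 3 = 0 := by omega
    have e1 : (3 * a + 1) % 3 = 1 := by omega
    have e2 : (3 * a + 2) % 3 = 2 := by omega
    rw [h, Finset.range_add_one, Finset.filter_insert, Finset.range_add_one, Finset.filter_insert,
      Finset.range_add_one, Finset.filter_insert, e0, e1, e2]
    interval_cases c <;> simp only [reduceIte, Nat.one_ne_zero, Nat.zero_ne_one] <;>
      norm_num <;> exact ih

lemma ncard_fin (m : ℕ) (p : ℕ → Prop) [DecidablePred p] :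
    {i : Fin m | p i.val}.ncard = ((Finset.range m).filter p).card := by
  rw [Set.ncard_eq_toFinset_card']
  simp only [Set.toFinset_setOf]
  apply Finset.card_bij (fun i _ => i.val)
  · intro a ha; simp at ha ⊢; exact ha
  · intro a _ b _ h; exact Fin.ext h
  · intro b hb; simp at hb; exact ⟨⟨b, hb.1⟩, by simp [hb.2]⟩

lemma cyc_count (m : ℕ) (hm : 3 ≤ m) (c : ℕ) :
    {i : Fin m | cyc m i.val = c}.ncard = 0 ∨ Odd {i : Fin m | cyc m i.val = c}.ncard := by
  obtain ⟨hb6, ht6, hbt, hb3⟩ := blk_facts m hm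
  rcases Nat.lt_or_ge c 3 with hc | hc
  · right
    rw [ncard_fin m (fun i => cyc m i = c)]
    have hsplit : Finset.range m = Finset.range (blk m) ∪ Finset.Ico (blk m) m := by
      rw [Finset.range_eq_Ico, Finset.range_eq_Ico,
        Finset.Ico_union_Ico_eq_Ico (Nat.zero_le _) (by omega)]
    rw [hsplit, Finset.filter_union]
    have h2 : (Finset.Ico (blk m) m).filter (fun i => cyc m i = c) = ∅ := by
      rw [Finset.filter_eq_empty_iff]
      intro i hi; simp at hi; unfold cyc; split <;> omega
    rw [h2, Finset.union_empty]
    have h1 : (Finset.range (blk m)).filter (fun i => cyc m i = c) =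
        (Finset.range (blk m)).filter (fun i => i % 3 = c) := by
      apply Finset.filter_congr; intro i hi; simp at hi; unfold cyc
      split <;> simp <;> omega
    rw [h1]
    obtain ⟨q, hq⟩ : ∃ q, blk m = 3 * (2 * q + 1) := ⟨blk m / 6, by omega⟩
    rw [hq, count3 c hc]
    exact ⟨q, by ring⟩
  · have hsub : {i : Fin m | cyc m i.val = c}.Subsingleton := by
      intro x hx y hy
      simp only [Set.mem_setOf_eq] at hx hy
      unfold cyc at hx hy
      apply Fin.ext
      split at hx <;> split at hy <;> omega
    rcases hsub.eq_empty_or_singleton with h | ⟨x, h⟩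
    · left; rw [h]; simp
    · right; rw [h, Set.ncard_singleton]; exact odd_one

lemma cycleGraph_adj_nat (m : ℕ) (hm : 3 ≤ m) (u v : Fin m) :
    (cycleGraph m).Adj u v ↔
      (u.val + 1 = v.val ∨ v.val + 1 = u.val ∨ (u.val + 1 = m ∧ v.val = 0) ∨
        (v.val + 1 = m ∧ u.val = 0)) := by
  have hu := u.isLt; have hv := v.isLt
  rw [cycleGraph_adj']
  simp only [Fin.sub_def]
  rcases Nat.lt_or_ge (m - v.val + u.val) m with h1 | h1 <;>
    rcases Nat.lt_or_ge (m - u.val + v.val) m with h2 | h2 <;>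
    [skip; skip; skip; skip] <;>
    first
    | (rw [Nat.mod_eq_of_lt h1, Nat.mod_eq_of_lt h2]; omega)
    | (rw [Nat.mod_eq_of_lt h1, Nat.mod_eq_sub_mod h2, Nat.mod_eq_of_lt (by omega)]; omega)
    | (rw [Nat.mod_eq_sub_mod h1, Nat.mod_eq_of_lt (by omega), Nat.mod_eq_of_lt h2]; omega)
    | (rw [Nat.mod_eq_sub_mod h1, Nat.mod_eq_of_lt (by omega), Nat.mod_eq_sub_mod h2,
        Nat.mod_eq_of_lt (by omega)]; omega)

/-! ### Vertices of `Iy m n` -/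

section Graph

variable (m n : ℕ)

/-- Cycle vertices of `G_m`. -/
def Am (i : Fin m) : (Fin m ⊕ Fin 2) ⊕ {w : Fin n ⊕ Fin 2 // w ≠ Sum.inr 1} :=
  Sum.inl (Sum.inl i)

/-- The hub vertices of `G_m` (`Pm 0 = x_m`, `Pm 1 = y`). -/
def Pm (j : Fin 2) : (Fin m ⊕ Fin 2) ⊕ {w : Fin n ⊕ Fin 2 // w ≠ Sum.inr 1} :=
  Sum.inl (Sum.inr j)

/-- Cycle vertices of `G_n`. -/
def Bn (j : Fin n) : (Fin m ⊕ Fin 2) ⊕ {w : Fin n ⊕ Fin 2 // w ≠ Sum.inr 1} :=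
  Sum.inr ⟨Sum.inl j, by simp⟩

/-- The vertex `x_n`. -/
def Xn : (Fin m ⊕ Fin 2) ⊕ {w : Fin n ⊕ Fin 2 // w ≠ Sum.inr 1} :=
  Sum.inr ⟨Sum.inr 0, by simp⟩

end Graph

end SOCaux
namespace SOCaux

variable {m n : ℕ}

lemma Am_inj : Function.Injective (Am m n) := by
  intro a b h; simpa [Am] using h

lemma Bn_inj : Function.Injective (Bn m n) := by
  intro a b h; simpa [Bn] using h

/-- The color of each vertex, as a natural number. -/
def phiv (m n : ℕ) : ((Fin m ⊕ Fin 2) ⊕ {w : Fin n ⊕ Fin 2 // w ≠ Sum.inr 1}) → ℕ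
  | Sum.inl (Sum.inl i) => cyc m i.val
  | Sum.inl (Sum.inr j) => if j.val = 0 then 8 else 16
  | Sum.inr w =>
    match w.1 with
    | Sum.inl j => 8 + cyc n j.val
    | Sum.inr _ => 0

lemma phiv_lt (hm : 3 ≤ m) (hn : 3 ≤ n) :
    ∀ v, phiv m n v < 17 := by
  rintro ((i | j) | ⟨(j1 | j2), h⟩) <;> simp only [phiv]
  · have := cyc_lt m i.val hm i.isLt; omega
  · split <;> omega
  · have := cyc_lt n j1.val hn j1.isLt; omega
  · omega

/-- The strong odd coloring of `Iy m n` with 17 colors. -/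
def phi (m n : ℕ) (hm : 3 ≤ m) (hn : 3 ≤ n)
    (v : (Fin m ⊕ Fin 2) ⊕ {w : Fin n ⊕ Fin 2 // w ≠ Sum.inr 1}) : Fin 17 :=
  ⟨phiv m n v, phiv_lt hm hn v⟩

lemma phi_eq_iff (hm : 3 ≤ m) (hn : 3 ≤ n) (v) (c : Fin 17) :
    phi m n hm hn v = c ↔ phiv m n v = c.val := by
  simp [phi, Fin.ext_iff]

/-! ### Adjacency characterizations -/

lemma adjAm_iff (hm : 3 ≤ m) (i : Fin m) (u) :
    (Iy m n).Adj (Am m n i) u ↔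
      (∃ i' : Fin m, u = Am m n i' ∧
        (i.val + 1 = i'.val ∨ i'.val + 1 = i.val ∨ (i.val + 1 = m ∧ i'.val = 0) ∨
          (i'.val + 1 = m ∧ i.val = 0))) ∨ (∃ j : Fin 2, u = Pm m n j) := by
  rcases u with (i' | j') | ⟨(j1 | j2), h⟩ <;>
      simp [Iy, onePointUnion, cycleJoinTwo, joinGraph, Am, Pm, Bn, Xn,
        cycleGraph_adj_nat m hm]

lemma adjBn_iff (hn : 3 ≤ n) (j : Fin n) (u) :
    (Iy m n).Adj (Bn m n j) u ↔
      (∃ j' : Fin n, u = Bn m n j' ∧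
        (j.val + 1 = j'.val ∨ j'.val + 1 = j.val ∨ (j.val + 1 = n ∧ j'.val = 0) ∨
          (j'.val + 1 = n ∧ j.val = 0))) ∨ u = Pm m n 1 ∨ u = Xn m n := by
  rcases u with (i' | j') | ⟨(j1 | j2), h⟩ <;>
      simp [Iy, onePointUnion, cycleJoinTwo, joinGraph, Am, Pm, Bn, Xn,
        cycleGraph_adj_nat n hn, Subtype.ext_iff]
  · have h2 := j2.isLt; simp only [ne_eq, Sum.inr.injEq, Fin.ext_iff] at h ⊢; omega

lemma adjX_iff (u) :
    (Iy m n).Adj (Pm m n 0) u ↔ ∃ i : Fin m, u = Am m n i := by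
  rcases u with (i' | j') | ⟨(j1 | j2), h⟩ <;>
    simp [Iy, onePointUnion, cycleJoinTwo, joinGraph, Am, Pm]

lemma adjY_iff (u) :
    (Iy m n).Adj (Pm m n 1) u ↔ (∃ i : Fin m, u = Am m n i) ∨ ∃ j : Fin n, u = Bn m n j := by
  rcases u with (i' | j') | ⟨(j1 | j2), h⟩ <;>
    simp [Iy, onePointUnion, cycleJoinTwo, joinGraph, Am, Pm, Bn, Subtype.ext_iff]

lemma adjXn_iff (u) :
    (Iy m n).Adj (Xn m n) u ↔ ∃ j : Fin n, u = Bn m n j := by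
  rcases u with (i' | j') | ⟨(j1 | j2), h⟩ <;>
    simp [Iy, onePointUnion, cycleJoinTwo, joinGraph, Am, Pm, Bn, Xn, Subtype.ext_iff]

end SOCaux
namespace SOCaux

variable {m n : ℕ}

lemma phiv_Am (i : Fin m) : phiv m n (Am m n i) = cyc m i.val := rfl
lemma phiv_Pm (j : Fin 2) : phiv m n (Pm m n j) = if j.val = 0 then 8 else 16 := rfl
lemma phiv_Bn (j : Fin n) : phiv m n (Bn m n j) = 8 + cyc n j.val := rfl
lemma phiv_Xn : phiv m n (Xn m n) = 0 := rfl

lemma subsingleton_case {V α : Type*} (G : SimpleGraph V) (φ : V → α) (v : V)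
    (h : ∀ u w, G.Adj v u → G.Adj v w → φ u = φ w → u = w) (c : α) :
    {u | G.Adj v u ∧ φ u = c}.ncard = 0 ∨ Odd {u | G.Adj v u ∧ φ u = c}.ncard := by
  have hs : {u | G.Adj v u ∧ φ u = c}.Subsingleton := by
    intro x hx y hy; exact h x y hx.1 hy.1 (hx.2.trans hy.2.symm)
  rcases hs.eq_empty_or_singleton with h' | ⟨x, h'⟩
  · left; rw [h']; simp
  · right; rw [h', Set.ncard_singleton]; exact odd_one

lemma upper (hm : 3 ≤ m) (hn : 3 ≤ n) :
    IsStrongOddColoring (Iy m n) (phi m n hm hn) := by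
  have hcm : ∀ i : Fin m, cyc m i.val < 8 := fun i => cyc_lt m _ hm i.isLt
  have hcn : ∀ j : Fin n, cyc n j.val < 8 := fun j => cyc_lt n _ hn j.isLt
  constructor
  · -- proper
    intro u w hadj he
    have he' : phiv m n u = phiv m n w := by simpa [phi, Fin.ext_iff] using he
    clear he
    rcases u with (i | j) | ⟨(p | q), hq⟩ <;> rcases w with (i' | j') | ⟨(p' | q'), hq'⟩ <;>
      simp only [Iy, onePointUnion, cycleJoinTwo, joinGraph, SimpleGraph.bot_adj,
        cycleGraph_adj_nat m hm, cycleGraph_adj_nat n hn, ne_eq, Sum.inl.injEq,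
        Sum.inr.injEq, reduceCtorEq, and_true, and_false, false_and, true_and] at hadj <;>
      simp only [phiv] at he'
    · exact cyc_adj_ne m _ _ hm i.isLt i'.isLt hadj he'
    · have := hcm i; split at he' <;> omega
    · have := hcm i'; split at he' <;> omega
    · subst hadj; have := hcn p'; simp at he'; omega
    · subst hadj; have := hcn p; simp at he'; omega
    · exact cyc_adj_ne n _ _ hn p.isLt p'.isLt hadj (by omega)
    · have := hcn p; omega
    · have := hcn p'; omega
  · -- strong odd condition
    intro v c
    rcases v with (i | j) | ⟨(p | q), hq⟩
    · -- cycle vertex of G_m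
      apply subsingleton_case
      intro u w hu hw he
      have he' : phiv m n u = phiv m n w := by simpa [phi, Fin.ext_iff] using he
      have hu' := (adjAm_iff hm i u).mp hu
      have hw' := (adjAm_iff hm i w).mp hw
      clear hu hw
      rcases hu' with ⟨i1, rfl, hd1⟩ | ⟨j1, rfl⟩ <;> rcases hw' with ⟨i2, rfl, hd2⟩ | ⟨j2, rfl⟩ <;>
        simp only [phiv_Am, phiv_Pm] at he'
      · exact congrArg _ (Fin.ext
          (cyc_nbr m i.val i1.val i2.val hm i.isLt i1.isLt i2.isLt hd1 hd2 he'))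
      · exfalso; have := hcm i1; split at he' <;> omega
      · exfalso; have := hcm i2; split at he' <;> omega
      · have h1 := j1.isLt; have h2 := j2.isLt
        have : j1 = j2 := by apply Fin.ext; split at he' <;> split at he' <;> omega
        rw [this]
    · -- hub vertex of G_m : x_m or y
      rcases Nat.lt_or_ge j.val 2 with hj | hj
      swap
      · exact absurd j.isLt (by omega)
      rcases Nat.lt_or_ge j.val 1 with hj0 | hj1
      · -- j = 0 : x_m
        have hj' : j = 0 := Fin.ext (by simpa using hj0)
        subst hj'
        have hset : {u | (Iy m n).Adj (Pm m n 0) u ∧ phi m n hm hn u = c} =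
            Am m n '' {i : Fin m | cyc m i.val = c.val} := by
          ext u
          simp only [Set.mem_setOf_eq, Set.mem_image, adjX_iff]
          constructor
          · rintro ⟨⟨i, rfl⟩, hc⟩
            exact ⟨i, by simpa [phi, Fin.ext_iff, phiv_Am] using hc, rfl⟩
          · rintro ⟨i, hi, rfl⟩
            exact ⟨⟨i, rfl⟩, by simp [phi, Fin.ext_iff, phiv_Am, hi]⟩
        show {u | (Iy m n).Adj (Pm m n 0) u ∧ phi m n hm hn u = c}.ncard = 0 ∨
          Odd {u | (Iy m n).Adj (Pm m n 0) u ∧ phi m n hm hn u = c}.ncard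
        rw [hset, Set.ncard_image_of_injective _ Am_inj]
        exact cyc_count m hm c.val
      · -- j = 1 : y
        have hj' : j = 1 := Fin.ext (by omega)
        subst hj'
        show {u | (Iy m n).Adj (Pm m n 1) u ∧ phi m n hm hn u = c}.ncard = 0 ∨
          Odd {u | (Iy m n).Adj (Pm m n 1) u ∧ phi m n hm hn u = c}.ncard
        rcases Nat.lt_or_ge c.val 8 with hc8 | hc8
        · have hset : {u | (Iy m n).Adj (Pm m n 1) u ∧ phi m n hm hn u = c} =
              Am m n '' {i : Fin m | cyc m i.val = c.val} := by
            ext u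
            simp only [Set.mem_setOf_eq, Set.mem_image, adjY_iff]
            constructor
            · rintro ⟨⟨i, rfl⟩ | ⟨jj, rfl⟩, hc⟩
              · exact ⟨i, by simpa [phi, Fin.ext_iff, phiv_Am] using hc, rfl⟩
              · exfalso
                have : 8 + cyc n jj.val = c.val := by
                  simpa [phi, Fin.ext_iff, phiv_Bn] using hc
                omega
            · rintro ⟨i, hi, rfl⟩
              exact ⟨Or.inl ⟨i, rfl⟩, by simp [phi, Fin.ext_iff, phiv_Am, hi]⟩
          rw [hset, Set.ncard_image_of_injective _ Am_inj]
          exact cyc_count m hm c.val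
        · have hset : {u | (Iy m n).Adj (Pm m n 1) u ∧ phi m n hm hn u = c} =
              Bn m n '' {j : Fin n | cyc n j.val = c.val - 8} := by
            ext u
            simp only [Set.mem_setOf_eq, Set.mem_image, adjY_iff]
            constructor
            · rintro ⟨⟨i, rfl⟩ | ⟨jj, rfl⟩, hc⟩
              · exfalso
                have : cyc m i.val = c.val := by
                  simpa [phi, Fin.ext_iff, phiv_Am] using hc
                have := hcm i; omega
              · refine ⟨jj, ?_, rfl⟩
                have : 8 + cyc n jj.val = c.val := by
                  simpa [phi, Fin.ext_iff, phiv_Bn] using hc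
                omega
            · rintro ⟨jj, hjj, rfl⟩
              exact ⟨Or.inr ⟨jj, rfl⟩,
                by simp only [phi_eq_iff, phiv_Bn]; omega⟩
          rw [hset, Set.ncard_image_of_injective _ Bn_inj]
          exact cyc_count n hn (c.val - 8)
    · -- cycle vertex of G_n
      apply subsingleton_case
      intro u w hu hw he
      have he' : phiv m n u = phiv m n w := by simpa [phi, Fin.ext_iff] using he
      have hu' := (adjBn_iff hn p u).mp hu
      have hw' := (adjBn_iff hn p w).mp hw
      clear hu hw
      rcases hu' with ⟨j1, rfl, hd1⟩ | rfl | rfl <;> rcases hw' with ⟨j2, rfl, hd2⟩ | rfl | rfl <;>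
        simp only [phiv_Bn, phiv_Pm, phiv_Xn] at he'
      · exact congrArg _ (Fin.ext
          (cyc_nbr n p.val j1.val j2.val hn p.isLt j1.isLt j2.isLt hd1 hd2 (by omega)))
      · exfalso; have := hcn j1; simp at he'; omega
      · exfalso; have := hcn j1; omega
      · exfalso; have := hcn j2; simp at he'; omega
      · rfl
      · exfalso; simp at he'
      · exfalso; have := hcn j2; omega
      · exfalso; simp at he'
      · rfl
    · -- x_n
      have hq0 : q = 0 := by
        have := q.isLt
        simp only [ne_eq, Sum.inr.injEq] at hq
        apply Fin.ext
        rcases Nat.lt_or_ge q.val 1 with h | h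
        · omega
        · exfalso; exact hq (Fin.ext (by omega))
      subst hq0
      show {u | (Iy m n).Adj (Xn m n) u ∧ phi m n hm hn u = c}.ncard = 0 ∨
        Odd {u | (Iy m n).Adj (Xn m n) u ∧ phi m n hm hn u = c}.ncard
      rcases Nat.lt_or_ge c.val 8 with hc8 | hc8
      · left
        have hset : {u | (Iy m n).Adj (Xn m n) u ∧ phi m n hm hn u = c} = ∅ := by
          ext u
          simp only [Set.mem_setOf_eq, Set.mem_empty_iff_false, iff_false, not_and, adjXn_iff]
          rintro ⟨jj, rfl⟩ hc
          have : 8 + cyc n jj.val = c.val := by simpa [phi, Fin.ext_iff, phiv_Bn] using hc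
          omega
        rw [hset]; simp
      · have hset : {u | (Iy m n).Adj (Xn m n) u ∧ phi m n hm hn u = c} =
            Bn m n '' {j : Fin n | cyc n j.val = c.val - 8} := by
          ext u
          simp only [Set.mem_setOf_eq, Set.mem_image, adjXn_iff]
          constructor
          · rintro ⟨⟨jj, rfl⟩, hc⟩
            refine ⟨jj, ?_, rfl⟩
            have : 8 + cyc n jj.val = c.val := by simpa [phi, Fin.ext_iff, phiv_Bn] using hc
            omega
          · rintro ⟨jj, hjj, rfl⟩
            exact ⟨⟨jj, rfl⟩, by simp only [phi_eq_iff, phiv_Bn]; omega⟩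
        rw [hset, Set.ncard_image_of_injective _ Bn_inj]
        exact cyc_count n hn (c.val - 8)

end SOCaux
namespace SOCaux

variable {m n : ℕ}

set_option maxHeartbeats 2000000 in
lemma lower (hm : 3 ≤ m) (hn : 3 ≤ n) {k : ℕ}
    (φ : ((Fin m ⊕ Fin 2) ⊕ {w : Fin n ⊕ Fin 2 // w ≠ Sum.inr 1}) → Fin k)
    (h : IsStrongOddColoring (Iy m n) φ) : 7 ≤ k := by
  classical
  obtain ⟨hp, ho⟩ := h
  set i0 : Fin m := ⟨0, by omega⟩ with hi0
  set i1 : Fin m := ⟨1, by omega⟩ with hi1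
  set i2 : Fin m := ⟨2, by omega⟩ with hi2
  set j0 : Fin n := ⟨0, by omega⟩ with hj0
  set j1 : Fin n := ⟨1, by omega⟩ with hj1
  set j2 : Fin n := ⟨2, by omega⟩ with hj2
  have adjAA : ∀ i i' : Fin m,
      (i.val + 1 = i'.val ∨ i'.val + 1 = i.val ∨ (i.val + 1 = m ∧ i'.val = 0) ∨
        (i'.val + 1 = m ∧ i.val = 0)) → (Iy m n).Adj (Am m n i) (Am m n i') :=
    fun i i' hd => (adjAm_iff hm i _).mpr (Or.inl ⟨i', rfl, hd⟩)
  have adjBB : ∀ j j' : Fin n,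
      (j.val + 1 = j'.val ∨ j'.val + 1 = j.val ∨ (j.val + 1 = n ∧ j'.val = 0) ∨
        (j'.val + 1 = n ∧ j.val = 0)) → (Iy m n).Adj (Bn m n j) (Bn m n j') :=
    fun j j' hd => (adjBn_iff hn j _).mpr (Or.inl ⟨j', rfl, hd⟩)
  -- neighbors of the identified vertex y and of the two hubs
  have hYA : ∀ i : Fin m, φ (Pm m n 1) ≠ φ (Am m n i) :=
    fun i => hp _ _ ((adjY_iff _).mpr (Or.inl ⟨i, rfl⟩))
  have hYB : ∀ j : Fin n, φ (Pm m n 1) ≠ φ (Bn m n j) :=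
    fun j => hp _ _ ((adjY_iff _).mpr (Or.inr ⟨j, rfl⟩))
  have hXA : ∀ i : Fin m, φ (Pm m n 0) ≠ φ (Am m n i) :=
    fun i => hp _ _ ((adjX_iff _).mpr ⟨i, rfl⟩)
  have hXB : ∀ j : Fin n, φ (Xn m n) ≠ φ (Bn m n j) :=
    fun j => hp _ _ ((adjXn_iff _).mpr ⟨j, rfl⟩)
  -- adjacent cycle vertices get different colors
  have hA01 : φ (Am m n i0) ≠ φ (Am m n i1) := hp _ _ (adjAA i0 i1 (Or.inl rfl))
  have hA12 : φ (Am m n i1) ≠ φ (Am m n i2) := hp _ _ (adjAA i1 i2 (Or.inl rfl))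
  have hB01 : φ (Bn m n j0) ≠ φ (Bn m n j1) := hp _ _ (adjBB j0 j1 (Or.inl rfl))
  have hB12 : φ (Bn m n j1) ≠ φ (Bn m n j2) := hp _ _ (adjBB j1 j2 (Or.inl rfl))
  -- distance-2 distinctness on the left cycle
  have hA02 : φ (Am m n i0) ≠ φ (Am m n i2) := by
    intro hEq
    have hset : {u | (Iy m n).Adj (Am m n i1) u ∧ φ u = φ (Am m n i0)} =
        {Am m n i0, Am m n i2} := by
      ext u
      simp only [Set.mem_setOf_eq, Set.mem_insert_iff, Set.mem_singleton_iff]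
      constructor
      · rintro ⟨hadj, hc⟩
        rcases (adjAm_iff hm i1 u).mp hadj with ⟨i', rfl, hd⟩ | ⟨jj, rfl⟩
        · have hv := i'.isLt
          have h1 : i1.val = 1 := rfl
          have : i'.val = 0 ∨ i'.val = 2 := by omega
          rcases this with h' | h'
          · exact Or.inl (congrArg _ (Fin.ext h'))
          · exact Or.inr (congrArg _ (Fin.ext h'))
        · exfalso
          have : jj = 0 ∨ jj = 1 := by
            have := jj.isLt
            rcases Nat.lt_or_ge jj.val 1 with h' | h'
            · exact Or.inl (Fin.ext (by omega))
            · exact Or.inr (Fin.ext (by omega))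
          rcases this with rfl | rfl
          · exact hXA i0 hc
          · exact hYA i0 hc
      · rintro (rfl | rfl)
        · exact ⟨adjAA i1 i0 (Or.inr (Or.inl rfl)), rfl⟩
        · exact ⟨adjAA i1 i2 (Or.inl rfl), hEq.symm⟩
    have h2 := ho (Am m n i1) (φ (Am m n i0))
    rw [hset, Set.ncard_pair (by simp [Am, hi0, hi2, Fin.ext_iff] :
      Am m n i0 ≠ Am m n i2)] at h2
    rcases h2 with h2 | h2
    · omega
    · rw [Nat.odd_iff] at h2; omega
  -- distance-2 distinctness on the right cycle
  have hB02 : φ (Bn m n j0) ≠ φ (Bn m n j2) := by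
    intro hEq
    have hset : {u | (Iy m n).Adj (Bn m n j1) u ∧ φ u = φ (Bn m n j0)} =
        {Bn m n j0, Bn m n j2} := by
      ext u
      simp only [Set.mem_setOf_eq, Set.mem_insert_iff, Set.mem_singleton_iff]
      constructor
      · rintro ⟨hadj, hc⟩
        rcases (adjBn_iff hn j1 u).mp hadj with ⟨j', rfl, hd⟩ | rfl | rfl
        · have hv := j'.isLt
          have h1 : j1.val = 1 := rfl
          have : j'.val = 0 ∨ j'.val = 2 := by omega
          rcases this with h' | h'
          · exact Or.inl (congrArg _ (Fin.ext h'))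
          · exact Or.inr (congrArg _ (Fin.ext h'))
        · exact absurd hc (hYB j0)
        · exact absurd hc (hXB j0)
      · rintro (rfl | rfl)
        · exact ⟨adjBB j1 j0 (Or.inr (Or.inl rfl)), rfl⟩
        · exact ⟨adjBB j1 j2 (Or.inl rfl), hEq.symm⟩
    have h2 := ho (Bn m n j1) (φ (Bn m n j0))
    rw [hset, Set.ncard_pair (by simp [Bn, hj0, hj2, Fin.ext_iff] :
      Bn m n j0 ≠ Bn m n j2)] at h2
    rcases h2 with h2 | h2
    · omega
    · rw [Nat.odd_iff] at h2; omega
  -- colors used on the two cycles are disjoint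
  have cross : ∀ (i : Fin m) (j : Fin n), φ (Am m n i) ≠ φ (Bn m n j) := by
    intro i j hEq
    set c := φ (Am m n i) with hc
    have hsetX : {u | (Iy m n).Adj (Pm m n 0) u ∧ φ u = c} =
        Am m n '' {i' : Fin m | φ (Am m n i') = c} := by
      ext u
      simp only [Set.mem_setOf_eq, Set.mem_image, adjX_iff]
      constructor
      · rintro ⟨⟨i', rfl⟩, hcu⟩; exact ⟨i', hcu, rfl⟩
      · rintro ⟨i', hi', rfl⟩; exact ⟨⟨i', rfl⟩, hi'⟩
    have hsetXn : {u | (Iy m n).Adj (Xn m n) u ∧ φ u = c} =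
        Bn m n '' {j' : Fin n | φ (Bn m n j') = c} := by
      ext u
      simp only [Set.mem_setOf_eq, Set.mem_image, adjXn_iff]
      constructor
      · rintro ⟨⟨j', rfl⟩, hcu⟩; exact ⟨j', hcu, rfl⟩
      · rintro ⟨j', hj', rfl⟩; exact ⟨⟨j', rfl⟩, hj'⟩
    have hsetY : {u | (Iy m n).Adj (Pm m n 1) u ∧ φ u = c} =
        Am m n '' {i' : Fin m | φ (Am m n i') = c} ∪
          Bn m n '' {j' : Fin n | φ (Bn m n j') = c} := by
      ext u
      simp only [Set.mem_setOf_eq, Set.mem_union, Set.mem_image, adjY_iff]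
      constructor
      · rintro ⟨⟨i', rfl⟩ | ⟨j', rfl⟩, hcu⟩
        · exact Or.inl ⟨i', hcu, rfl⟩
        · exact Or.inr ⟨j', hcu, rfl⟩
      · rintro (⟨i', hi', rfl⟩ | ⟨j', hj', rfl⟩)
        · exact ⟨Or.inl ⟨i', rfl⟩, hi'⟩
        · exact ⟨Or.inr ⟨j', rfl⟩, hj'⟩
    have hTA : Odd {i' : Fin m | φ (Am m n i') = c}.ncard := by
      have h1 := ho (Pm m n 0) c
      rw [hsetX, Set.ncard_image_of_injective _ Am_inj] at h1
      rcases h1 with h1 | h1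
      · exfalso
        have hpos : 0 < {i' : Fin m | φ (Am m n i') = c}.ncard :=
          (Set.ncard_pos (Set.toFinite _)).mpr ⟨i, hc.symm⟩
        omega
      · exact h1
    have hTB : Odd {j' : Fin n | φ (Bn m n j') = c}.ncard := by
      have h1 := ho (Xn m n) c
      rw [hsetXn, Set.ncard_image_of_injective _ Bn_inj] at h1
      rcases h1 with h1 | h1
      · exfalso
        have hpos : 0 < {j' : Fin n | φ (Bn m n j') = c}.ncard :=
          (Set.ncard_pos (Set.toFinite _)).mpr ⟨j, hEq.symm⟩
        omega
      · exact h1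
    have hdisj : Disjoint (Am m n '' {i' : Fin m | φ (Am m n i') = c})
        (Bn m n '' {j' : Fin n | φ (Bn m n j') = c}) := by
      rw [Set.disjoint_left]
      rintro x ⟨i', -, rfl⟩ ⟨j', -, hxx⟩
      simp [Am, Bn] at hxx
    have hY := ho (Pm m n 1) c
    rw [hsetY, Set.ncard_union_eq hdisj (Set.toFinite _) (Set.toFinite _),
      Set.ncard_image_of_injective _ Am_inj, Set.ncard_image_of_injective _ Bn_inj] at hY
    obtain ⟨s, hs⟩ := hTA
    obtain ⟨t, ht⟩ := hTB
    rcases hY with hY | hY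
    · omega
    · rw [Nat.odd_iff] at hY; omega
  -- seven pairwise distinct colors
  have hinj : Function.Injective
      (![φ (Am m n i0), φ (Am m n i1), φ (Am m n i2), φ (Bn m n j0), φ (Bn m n j1),
        φ (Bn m n j2), φ (Pm m n 1)] : Fin 7 → Fin k) := by
    have c00 := cross i0 j0; have c01 := cross i0 j1; have c02 := cross i0 j2
    have c10 := cross i1 j0; have c11 := cross i1 j1; have c12 := cross i1 j2
    have c20 := cross i2 j0; have c21 := cross i2 j1; have c22 := cross i2 j2
    have y0 := hYA i0; have y1 := hYA i1; have y2 := hYA i2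
    have z0 := hYB j0; have z1 := hYB j1; have z2 := hYB j2
    intro a b hab
    fin_cases a <;> fin_cases b <;>
      first
      | rfl
      | (exfalso; simp only [Matrix.cons_val_zero, Matrix.cons_val_one, Matrix.head_cons,
          Matrix.cons_val_two, Matrix.tail_cons, Matrix.cons_val_three, Matrix.cons_val_four,
          Matrix.cons_val_succ, Matrix.cons_val_fin_one] at hab
         first
         | exact hA01 hab | exact hA01 hab.symm
         | exact hA12 hab | exact hA12 hab.symm
         | exact hA02 hab | exact hA02 hab.symm
         | exact hB01 hab | exact hB01 hab.symm
         | exact hB12 hab | exact hB12 hab.symm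
         | exact hB02 hab | exact hB02 hab.symm
         | exact c00 hab | exact c00 hab.symm
         | exact c01 hab | exact c01 hab.symm
         | exact c02 hab | exact c02 hab.symm
         | exact c10 hab | exact c10 hab.symm
         | exact c11 hab | exact c11 hab.symm
         | exact c12 hab | exact c12 hab.symm
         | exact c20 hab | exact c20 hab.symm
         | exact c21 hab | exact c21 hab.symm
         | exact c22 hab | exact c22 hab.symm
         | exact y0 hab | exact y0 hab.symm
         | exact y1 hab | exact y1 hab.symm
         | exact y2 hab | exact y2 hab.symm
         | exact z0 hab | exact z0 hab.symm
         | exact z1 hab | exact z1 hab.symm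
         | exact z2 hab | exact z2 hab.symm)
  have := Fintype.card_le_of_injective _ hinj
  simpa using this

end SOCaux

/-- For all `m, n ≥ 3`, `7 ≤ χ_so(I_y(G_m, G_n)) ≤ 17`. -/
theorem stmt_10 (m n : ℕ) (hm : 3 ≤ m) (hn : 3 ≤ n) :
    7 ≤ strongOddChromaticNumber (Iy m n) ∧ strongOddChromaticNumber (Iy m n) ≤ 17 := by
  have hmem : 17 ∈ {k : ℕ |
      ∃ φ : ((Fin m ⊕ Fin 2) ⊕ {w : Fin n ⊕ Fin 2 // w ≠ Sum.inr 1}) → Fin k,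
        IsStrongOddColoring (Iy m n) φ} :=
    ⟨SOCaux.phi m n hm hn, SOCaux.upper hm hn⟩
  constructor
  · obtain ⟨ψ, hψ⟩ := Nat.sInf_mem (⟨17, hmem⟩ : Set.Nonempty _)
    exact SOCaux.lower hm hn ψ hψ
  · exact Nat.sInf_le hmem
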